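/- Let b, ν, l be integers with ν ≥ 2, b ≥ ν, l ≥ 1, and let n_1, …, n_l be integers all ≥ ν, satisfying: (1) Σ_{i=1}^l n_i ≤ (l−1)·b + ν; (2) whenever i ≥ 2 and n_i < b, then n_{i-1} ≥ b(ν−1) + 2; (3) if ν = 2, then whenever i ≥ 3, n_i < b and n_{i-1} ≤ 2b − 2, one has n_{i-2} ≥ 2b − 1. Then n_1 = ν and n_i = b for all i = 2, …, l. -/

import Mathlib

theorem prefixSumAux (n : ℕ → ℕ) (ν b : ℕ) :
    ∀ m : ℕ, n 1 = ν → (∀ i, 2 ≤ i → i ≤ m + 1 → n i = b) →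
    ∑ i ∈ Finset.Icc 1 (m+1), n i = ν + m * b := by
  intro m
  induction m with
  | zero => intro h1 _; simp [h1]
  | succ k ih =>
    intro h1 h2
    rw [Finset.sum_Icc_succ_top (by omega), ih h1 (fun i a c => h2 i a (by omega)),
        h2 (k+2) (by omega) le_rfl]
    ring

theorem auxStmt5 (b ν : ℕ) (hν : 2 ≤ ν) (hb : ν ≤ b) :
    ∀ l : ℕ, 1 ≤ l → ∀ n : ℕ → ℕ,
    (∀ i, 1 ≤ i → i ≤ l → ν ≤ n i) →
    (∑ i ∈ Finset.Icc 1 l, n i ≤ (l - 1) * b + ν) →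
    (∀ i, 2 ≤ i → i ≤ l → n i < b → b * (ν - 1) + 2 ≤ n (i - 1)) →
    (ν = 2 → ∀ i, 3 ≤ i → i ≤ l → n i < b → n (i - 1) ≤ 2 * b - 2 →
      2 * b - 1 ≤ n (i - 2)) →
    n 1 = ν ∧ ∀ i, 2 ≤ i → i ≤ l → n i = b := by
  intro l
  induction l using Nat.strong_induction_on with
  | _ l IH =>
  intro hl n hge h1 h2 h3
  rcases Nat.lt_or_ge l 2 with hl2 | hl2
  · -- l = 1
    have hl1 : l = 1 := by omega
    subst hl1
    simp only [Finset.Icc_self, Finset.sum_singleton] at h1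
    have := hge 1 le_rfl le_rfl
    exact ⟨by omega, fun i hi hi' => by omega⟩
  · -- l ≥ 2
    obtain ⟨k, rfl⟩ : ∃ k, l = k + 2 := ⟨l - 2, by omega⟩
    have hs1 : ∑ i ∈ Finset.Icc 1 (k+2), n i
        = ∑ i ∈ Finset.Icc 1 (k+1), n i + n (k+2) :=
      Finset.sum_Icc_succ_top (by omega) n
    have h1' : ∑ i ∈ Finset.Icc 1 (k+1), n i + n (k+2) ≤ (k+1) * b + ν := by
      rw [← hs1]
      simpa using h1
    by_cases hnl : b ≤ n (k+2)
    · -- last term is ≥ b : apply IH to the prefix of length k+1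
      have e1 : (k+1) * b = k * b + b := by ring
      have IH' := IH (k+1) (by omega) (by omega) n
        (fun i a c => hge i a (by omega))
        (by
          have : ∑ i ∈ Finset.Icc 1 (k+1), n i ≤ k * b + ν := by omega
          simpa using this)
        (fun i a c d => h2 i a (by omega) d)
        (fun hv i a c d e => h3 hv i a (by omega) d e)
      obtain ⟨hn1, hrest⟩ := IH'
      have hps := prefixSumAux n ν b k hn1 hrest
      refine ⟨hn1, fun i hi hi' => ?_⟩
      rcases Nat.lt_or_ge i (k+2) with h | h
      · exact hrest i hi (by omega)
      · have : i = k + 2 := by omega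
        subst this
        have : ν + k * b + n (k+2) ≤ (k+1) * b + ν := by rw [← hps]; exact h1'
        omega
    · -- last term < b
      push_neg at hnl
      have hlast : b * (ν - 1) + 2 ≤ n (k+1) := by
        have := h2 (k+2) (by omega) le_rfl hnl
        simpa using this
      have hnlast : ν ≤ n (k+2) := hge (k+2) (by omega) le_rfl
      rcases Nat.lt_or_ge ν 3 with hν3 | hν3
      · -- ν = 2
        have hν2 : ν = 2 := by omega
        subst hν2
        have hlast2 : b + 2 ≤ n (k+1) := by omega
        rcases Nat.eq_zero_or_pos k with rfl | hkpos
        · -- l = 2 : contradiction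
          exfalso
          have h1'' : ∑ i ∈ Finset.Icc 1 1, n i + n 2 ≤ 1 * b + 2 := h1'
          have ha : b + 2 ≤ n 1 := hlast2
          have hbb : 2 ≤ n 2 := hnlast
          have hc : ∑ i ∈ Finset.Icc 1 1, n i = n 1 := by simp
          omega
        · by_cases h19 : 2 * b - 1 ≤ n (k+1)
          · -- remove two elements
            exfalso
            obtain ⟨j, rfl⟩ : ∃ j, k = j + 1 := ⟨k - 1, by omega⟩
            have h1'' : ∑ i ∈ Finset.Icc 1 (j+2), n i + n (j+3) ≤ (j+2) * b + 2 := h1'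
            have ha : 2 * b - 1 ≤ n (j+2) := h19
            have hbb : 2 ≤ n (j+3) := hnlast
            have hs2 : ∑ i ∈ Finset.Icc 1 (j+2), n i
                = ∑ i ∈ Finset.Icc 1 (j+1), n i + n (j+2) :=
              Finset.sum_Icc_succ_top (by omega) n
            have e1 : (j+2) * b = j * b + 2 * b := by ring
            have IH' := IH (j+1) (by omega) (by omega) n
              (fun i a c => hge i a (by omega))
              (by
                have : ∑ i ∈ Finset.Icc 1 (j+1), n i ≤ j * b + 2 := by omega
                simpa using this)
              (fun i a c d => h2 i a (by omega) d)
              (fun hv i a c d e => h3 hv i a (by omega) d e)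
            obtain ⟨hn1, hrest⟩ := IH'
            have hps := prefixSumAux n 2 b j hn1 hrest
            omega
          · -- use h3
            push_neg at h19
            have h18 : n (k+1) ≤ 2 * b - 2 := by omega
            have hkk : 2 * b - 1 ≤ n k := by
              have := h3 rfl (k+2) (by omega) le_rfl hnl (by simpa using h18)
              simpa using this
            rcases Nat.lt_or_ge k 2 with hk2 | hk2
            · -- k = 1, l = 3 : direct contradiction
              exfalso
              have hk1 : k = 1 := by omega
              subst hk1
              have h1'' : ∑ i ∈ Finset.Icc 1 2, n i + n 3 ≤ 2 * b + 2 := h1'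
              have ha : 2 * b - 1 ≤ n 1 := hkk
              have hbb : b + 2 ≤ n 2 := hlast2
              have hc : 2 ≤ n 3 := hnlast
              have hs2 : ∑ i ∈ Finset.Icc 1 2, n i
                  = ∑ i ∈ Finset.Icc 1 1, n i + n 2 :=
                Finset.sum_Icc_succ_top (by omega) n
              have hd : ∑ i ∈ Finset.Icc 1 1, n i = n 1 := by simp
              omega
            · -- remove three elements
              exfalso
              obtain ⟨j, rfl⟩ : ∃ j, k = j + 2 := ⟨k - 2, by omega⟩
              have h1'' : ∑ i ∈ Finset.Icc 1 (j+3), n i + n (j+4) ≤ (j+3) * b + 2 := h1'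
              have ha : 2 * b - 1 ≤ n (j+2) := hkk
              have hbb : b + 2 ≤ n (j+3) := hlast2
              have hc : 2 ≤ n (j+4) := hnlast
              have hs2 : ∑ i ∈ Finset.Icc 1 (j+3), n i
                  = ∑ i ∈ Finset.Icc 1 (j+2), n i + n (j+3) :=
                Finset.sum_Icc_succ_top (by omega) n
              have hs3 : ∑ i ∈ Finset.Icc 1 (j+2), n i
                  = ∑ i ∈ Finset.Icc 1 (j+1), n i + n (j+2) :=
                Finset.sum_Icc_succ_top (by omega) n
              have e1 : (j+3) * b = j * b + 3 * b := by ring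
              have IH' := IH (j+1) (by omega) (by omega) n
                (fun i a c => hge i a (by omega))
                (by
                  have : ∑ i ∈ Finset.Icc 1 (j+1), n i ≤ j * b + 2 := by omega
                  simpa using this)
                (fun i a c d => h2 i a (by omega) d)
                (fun hv i a c d e => h3 hv i a (by omega) d e)
              obtain ⟨hn1, hrest⟩ := IH'
              have hps := prefixSumAux n 2 b j hn1 hrest
              omega
      · -- ν ≥ 3 : contradiction
        exfalso
        have hge2 : b * 2 + 2 ≤ n (k+1) := by
          have : b * 2 ≤ b * (ν - 1) := Nat.mul_le_mul_left b (by omega)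
          omega
        rcases Nat.eq_zero_or_pos k with rfl | hkpos
        · -- l = 2
          have h1'' : ∑ i ∈ Finset.Icc 1 1, n i + n 2 ≤ 1 * b + ν := h1'
          have ha : b * 2 + 2 ≤ n 1 := hge2
          have hbb : ν ≤ n 2 := hnlast
          have hc : ∑ i ∈ Finset.Icc 1 1, n i = n 1 := by simp
          omega
        · obtain ⟨j, rfl⟩ : ∃ j, k = j + 1 := ⟨k - 1, by omega⟩
          have h1'' : ∑ i ∈ Finset.Icc 1 (j+2), n i + n (j+3) ≤ (j+2) * b + ν := h1'
          have ha : b * 2 + 2 ≤ n (j+2) := hge2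
          have hbb : ν ≤ n (j+3) := hnlast
          have hs2 : ∑ i ∈ Finset.Icc 1 (j+2), n i
              = ∑ i ∈ Finset.Icc 1 (j+1), n i + n (j+2) :=
            Finset.sum_Icc_succ_top (by omega) n
          have e1 : (j+2) * b = j * b + 2 * b := by ring
          have IH' := IH (j+1) (by omega) (by omega) n
            (fun i a c => hge i a (by omega))
            (by
              have : ∑ i ∈ Finset.Icc 1 (j+1), n i ≤ j * b + ν := by omega
              simpa using this)
            (fun i a c d => h2 i a (by omega) d)
            (fun hv i a c d e => h3 hv i a (by omega) d e)
          obtain ⟨hn1, hrest⟩ := IH'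
          have hps := prefixSumAux n ν b j hn1 hrest
          omega

theorem stmt5 (b ν l : ℕ) (n : ℕ → ℕ)
    (hν : 2 ≤ ν) (hb : ν ≤ b) (hl : 1 ≤ l)
    (hge : ∀ i, 1 ≤ i → i ≤ l → ν ≤ n i)
    (h1 : ∑ i ∈ Finset.Icc 1 l, n i ≤ (l - 1) * b + ν)
    (h2 : ∀ i, 2 ≤ i → i ≤ l → n i < b → b * (ν - 1) + 2 ≤ n (i - 1))
    (h3 : ν = 2 → ∀ i, 3 ≤ i → i ≤ l → n i < b → n (i - 1) ≤ 2 * b - 2 →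
      2 * b - 1 ≤ n (i - 2)) :
    n 1 = ν ∧ ∀ i, 2 ≤ i → i ≤ l → n i = b := by
  exact auxStmt5 b ν hν hb l hl n hge h1 h2 h3
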